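/- Let P and E be real normed vector spaces, F : P × E → E a map, and xf : P → E a map satisfying xf s = F (s, xf s) for all s ∈ P. Fix s₀ ∈ P; assume xf is Fréchet differentiable at s₀ and F is Fréchet differentiable at (s₀, xf s₀), and write D := fderiv ℝ F (s₀, xf s₀), D_s u = D (u, 0), D_x v = D (0, v). Suppose there is a continuous linear operator J : E →L[ℝ] E with J ∘ (id − D_x) = id and (id − D_x) ∘ J = id. Let ℓ : E → ℝ be Fréchet differentiable at xf s₀. Then fderiv ℝ (ℓ ∘ xf) s₀ = (fderiv ℝ ℓ (xf s₀)) ∘ J ∘ D_s. -/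

import Mathlib

/-- DEQ backpropagation formula: under the hypotheses of the
implicit differentiation theorem, if moreover the loss `ℓ : E → ℝ` is
differentiable at `xf s₀`, then
`fderiv ℝ (ℓ ∘ xf) s₀ = (fderiv ℝ ℓ (xf s₀)) ∘ J ∘ D_s`. -/
theorem stmt_12 {P E : Type*} [NormedAddCommGroup P] [NormedSpace ℝ P]
    [NormedAddCommGroup E] [NormedSpace ℝ E]
    (F : P × E → E) (xf : P → E)
    (hfix : ∀ s : P, xf s = F (s, xf s)) (s₀ : P)
    (hxf : DifferentiableAt ℝ xf s₀)
    (hF : DifferentiableAt ℝ F (s₀, xf s₀))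
    (D : P × E →L[ℝ] E) (hD : D = fderiv ℝ F (s₀, xf s₀))
    (Ds : P →L[ℝ] E) (hDs : ∀ u : P, Ds u = D (u, 0))
    (Dx : E →L[ℝ] E) (hDx : ∀ v : E, Dx v = D (0, v))
    (J : E →L[ℝ] E)
    (hJ1 : J.comp (ContinuousLinearMap.id ℝ E - Dx) = ContinuousLinearMap.id ℝ E)
    (hJ2 : (ContinuousLinearMap.id ℝ E - Dx).comp J = ContinuousLinearMap.id ℝ E)
    (ℓ : E → ℝ) (hℓ : DifferentiableAt ℝ ℓ (xf s₀)) :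
    fderiv ℝ (ℓ ∘ xf) s₀ = ((fderiv ℝ ℓ (xf s₀)).comp J).comp Ds := by
  set X := fderiv ℝ xf s₀ with hX
  -- derivative of s ↦ (s, xf s)
  have hpair : HasFDerivAt (fun s : P => (s, xf s))
      ((ContinuousLinearMap.id ℝ P).prod X) s₀ :=
    HasFDerivAt.prodMk (hasFDerivAt_id s₀) hxf.hasFDerivAt
  have hcomp : HasFDerivAt (fun s : P => F (s, xf s))
      (D.comp ((ContinuousLinearMap.id ℝ P).prod X)) s₀ := by
    rw [hD]
    exact hF.hasFDerivAt.comp s₀ hpair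
  have hxf' : HasFDerivAt xf (D.comp ((ContinuousLinearMap.id ℝ P).prod X)) s₀ := by
    have : (fun s : P => F (s, xf s)) = xf := by
      funext s; exact (hfix s).symm
    rwa [this] at hcomp
  have hXeq : X = D.comp ((ContinuousLinearMap.id ℝ P).prod X) := hxf'.fderiv
  -- pointwise: X u = Ds u + Dx (X u)
  have hpt : ∀ u : P, X u = Ds u + Dx (X u) := by
    intro u
    conv_lhs => rw [hXeq]
    have : (u, X u) = ((u, 0) : P × E) + (0, X u) := by simp
    simp only [ContinuousLinearMap.comp_apply, ContinuousLinearMap.prod_apply,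
      ContinuousLinearMap.id_apply, this, map_add, hDs, hDx]
  have hIX : (ContinuousLinearMap.id ℝ E - Dx).comp X = Ds := by
    ext u
    simp only [ContinuousLinearMap.comp_apply, ContinuousLinearMap.sub_apply,
      ContinuousLinearMap.id_apply]
    exact sub_eq_of_eq_add (hpt u)
  have hXJ : X = J.comp Ds := by
    calc X = (J.comp ((ContinuousLinearMap.id ℝ E - Dx))).comp X := by
            rw [hJ1, ContinuousLinearMap.id_comp]
      _ = J.comp ((ContinuousLinearMap.id ℝ E - Dx).comp X) := by
            rw [ContinuousLinearMap.comp_assoc]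
      _ = J.comp Ds := by rw [hIX]
  rw [fderiv_comp s₀ hℓ hxf, ← hX, hXJ, ContinuousLinearMap.comp_assoc]
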